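/- For n ≤ m, 0 < δ < 1, and ρ ∈ (0,1), the ratio |B_R(0,(1−δ)ρ)| / |B_R(0,ρ)| is at most q^{−c·nm} for some constant c > 0 depending only on δ and ρ (for sufficiently large n, m). -/

import Mathlib

open scoped Classical

variable {F : Type} [Field F] [Fintype F]

private lemma rank_reindex'' {m n m' n' : Type*} [Fintype m] [Fintype n] [Fintype m'] [Fintype n']
    [DecidableEq n] [DecidableEq n'] (e₁ : m ≃ m') (e₂ : n ≃ n') (A : Matrix m n F) :
    (Matrix.reindex e₁ e₂ A).rank = A.rank := by
  rw [Matrix.rank, Matrix.rank, Matrix.mulVecLin_reindex, LinearMap.range_comp,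
    LinearMap.range_comp, LinearEquiv.range, Submodule.map_top, LinearEquiv.finrank_map_eq]

private lemma low_bound (q : ℕ) (hq : Fintype.card F = q) {r m n : ℕ} (hrn : r ≤ n) (hnm : n ≤ m) :
    q ^ (r * (r - 1) + r * (n - r) + r * (m - r)) ≤
      Nat.card {X : Matrix (Fin m) (Fin n) F // X.rank ≤ r} := by
  have hq2 : 2 ≤ q := hq ▸ Fintype.one_lt_card
  let em : Fin r ⊕ Fin (m - r) ≃ Fin m := finSumFinEquiv.trans (finCongr (by omega))
  let en : Fin r ⊕ Fin (n - r) ≃ Fin n := finSumFinEquiv.trans (finCongr (by omega))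
  let T := GL (Fin r) F × Matrix (Fin r) (Fin (n - r)) F × Matrix (Fin (m - r)) (Fin r) F
  have hAinv : ∀ A : GL (Fin r) F,
      ((A⁻¹ : GL (Fin r) F) : Matrix (Fin r) (Fin r) F) * (A : Matrix (Fin r) (Fin r) F) = 1 := by
    intro A
    rw [← Units.val_mul, inv_mul_cancel, Units.val_one]
  have hblocks : ∀ p : T,
      Matrix.fromBlocks (p.1 : Matrix (Fin r) (Fin r) F) p.2.1 p.2.2
          (p.2.2 * ((p.1⁻¹ : GL (Fin r) F) : Matrix (Fin r) (Fin r) F) * p.2.1)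
        = Matrix.fromRows (1 : Matrix (Fin r) (Fin r) F)
            (p.2.2 * ((p.1⁻¹ : GL (Fin r) F) : Matrix (Fin r) (Fin r) F)) *
          Matrix.fromCols (p.1 : Matrix (Fin r) (Fin r) F) p.2.1 := by
    intro p
    rw [Matrix.fromRows_mul_fromCols]
    rw [Matrix.one_mul, Matrix.one_mul, Matrix.mul_assoc p.2.2 _ (p.1 : Matrix (Fin r) (Fin r) F), hAinv, Matrix.mul_one]
  let ι : T → Matrix (Fin m) (Fin n) F := fun p =>
    Matrix.reindex em en (Matrix.fromBlocks (p.1 : Matrix (Fin r) (Fin r) F) p.2.1 p.2.2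
      (p.2.2 * ((p.1⁻¹ : GL (Fin r) F) : Matrix (Fin r) (Fin r) F) * p.2.1))
  have hrank : ∀ p : T, (ι p).rank ≤ r := by
    intro p
    show (Matrix.reindex em en _).rank ≤ r
    rw [rank_reindex'', hblocks p]
    refine le_trans (Matrix.rank_mul_le_left _ _) ?_
    simpa using Matrix.rank_le_card_width
      (Matrix.fromRows (1 : Matrix (Fin r) (Fin r) F)
        (p.2.2 * ((p.1⁻¹ : GL (Fin r) F) : Matrix (Fin r) (Fin r) F)))
  let κ : T → {X : Matrix (Fin m) (Fin n) F // X.rank ≤ r} := fun p => ⟨ι p, hrank p⟩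
  have hinj : Function.Injective κ := by
    intro p p' h
    have h2 : Matrix.fromBlocks (p.1 : Matrix (Fin r) (Fin r) F) p.2.1 p.2.2 _
        = Matrix.fromBlocks (p'.1 : Matrix (Fin r) (Fin r) F) p'.2.1 p'.2.2 _ :=
      (Matrix.reindex em en).injective (congrArg Subtype.val h)
    have hA := congrArg Matrix.toBlocks₁₁ h2
    have hB := congrArg Matrix.toBlocks₁₂ h2
    have hC := congrArg Matrix.toBlocks₂₁ h2
    rw [Matrix.toBlocks_fromBlocks₁₁, Matrix.toBlocks_fromBlocks₁₁] at hA
    rw [Matrix.toBlocks_fromBlocks₁₂, Matrix.toBlocks_fromBlocks₁₂] at hB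
    rw [Matrix.toBlocks_fromBlocks₂₁, Matrix.toBlocks_fromBlocks₂₁] at hC
    rw [Prod.ext_iff, Prod.ext_iff]
    exact ⟨Units.ext hA, hB, hC⟩
  have hcard : Nat.card T ≤ Nat.card {X : Matrix (Fin m) (Fin n) F // X.rank ≤ r} :=
    Nat.card_le_card_of_injective κ hinj
  refine le_trans ?_ hcard
  have hmat : ∀ a b : ℕ, Nat.card (Matrix (Fin a) (Fin b) F) = q ^ (a * b) := by
    intro a b
    rw [Nat.card_eq_fintype_card]
    show Fintype.card (Fin a → Fin b → F) = q ^ (a * b)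
    rw [Fintype.card_fun, Fintype.card_fun, Fintype.card_fin, Fintype.card_fin, hq, ← pow_mul,
      mul_comm b a]
  have hGL : q ^ (r * (r - 1)) ≤ Nat.card (GL (Fin r) F) := by
    rw [Matrix.card_GL_field, hq]
    calc q ^ (r * (r - 1)) = ∏ _i : Fin r, q ^ (r - 1) := by
          rw [Finset.prod_const, Finset.card_univ, Fintype.card_fin, ← pow_mul, mul_comm]
      _ ≤ ∏ i : Fin r, (q ^ r - q ^ (i : ℕ)) := by
          refine Finset.prod_le_prod' fun i _ => ?_
          have hr0 : 0 < r := i.pos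
          have h1 : q ^ (i : ℕ) ≤ q ^ (r - 1) :=
            Nat.pow_le_pow_right (by omega) (by omega)
          have h2 : 2 * q ^ (r - 1) ≤ q ^ r := by
            calc 2 * q ^ (r - 1) ≤ q * q ^ (r - 1) := by
                  exact Nat.mul_le_mul_right _ hq2
              _ = q ^ r := by
                  rw [← pow_succ']
                  congr 1
                  omega
          have h2' : q ^ (r - 1) + q ^ (r - 1) ≤ q ^ r := by rw [← two_mul]; exact h2
          exact Nat.le_sub_of_add_le (le_trans (Nat.add_le_add_left h1 _) h2')
  calc q ^ (r * (r - 1) + r * (n - r) + r * (m - r))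
      = q ^ (r * (r - 1)) * q ^ (r * (n - r)) * q ^ ((m - r) * r) := by
        rw [← pow_add, ← pow_add]; ring_nf
    _ ≤ Nat.card (GL (Fin r) F) * q ^ (r * (n - r)) * q ^ ((m - r) * r) := by
        exact Nat.mul_le_mul_right _ (Nat.mul_le_mul_right _ hGL)
    _ = Nat.card T := by
        rw [Nat.card_prod, Nat.card_prod, hmat, hmat, mul_assoc]

private lemma exists_spanning_finset {m n k : ℕ} (hn : 0 < n) (hk : k ≤ n)
    (X : Matrix (Fin m) (Fin n) F) (hX : X.rank ≤ k) :
    ∃ J : Finset (Fin n), J.card = k ∧ ∀ j, X.transpose j ∈ Submodule.span F (X.transpose '' (J : Set (Fin n))) := by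
  obtain ⟨b, hbt, hbspan, hbind⟩ := exists_linearIndependent F (Set.range X.transpose)
  have hbfin : b.Finite := (Set.finite_range X.transpose).subset hbt
  haveI : Fintype b := hbfin.fintype
  have hcardb : b.toFinset.card ≤ k := by
    rw [← finrank_span_set_eq_card hbind, hbspan]
    rw [Matrix.rank_eq_finrank_span_cols] at hX
    exact hX
  have hex : ∀ x ∈ b, ∃ j, X.transpose j = x := fun x hx => hbt hx
  let g : (Fin m → F) → Fin n := fun x =>
    if h : ∃ j, X.transpose j = x then h.choose else ⟨0, hn⟩
  have hg : ∀ x ∈ b, X.transpose (g x) = x := by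
    intro x hx
    have h : ∃ j, X.transpose j = x := hex x hx
    simp only [g, dif_pos h]
    exact h.choose_spec
  set J₀ : Finset (Fin n) := b.toFinset.image g with hJ₀
  have hJ₀card : J₀.card ≤ k := le_trans (Finset.card_image_le) hcardb
  obtain ⟨J, hJ₀J, hJcard⟩ := Finset.exists_superset_card_eq hJ₀card (by simpa using hk)
  refine ⟨J, hJcard, fun j => ?_⟩
  have h1 : X.transpose j ∈ Submodule.span F (Set.range X.transpose) :=
    Submodule.subset_span (Set.mem_range_self j)
  rw [← hbspan] at h1
  refine Submodule.span_mono ?_ h1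
  intro x hx
  refine ⟨g x, ?_, hg x hx⟩
  exact hJ₀J (Finset.mem_image_of_mem g (Set.mem_toFinset.mpr hx))

private lemma up_bound (q : ℕ) (hq : Fintype.card F = q) {k m n : ℕ} (hk : k ≤ n) (hn : 0 < n) :
    Nat.card {X : Matrix (Fin m) (Fin n) F // X.rank ≤ k} ≤
      2 ^ n * q ^ (m * k + k * (n - k)) := by
  have hcompl : ∀ J : Finset (Fin n), J.card = k → Jᶜ.card = n - k := by
    intro J hJ
    rw [Finset.card_compl, hJ, Fintype.card_fin]
  let T := {J : Finset (Fin n) // J.card = k} × Matrix (Fin m) (Fin k) F ×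
    Matrix (Fin (n - k)) (Fin k) F
  let ψ : T → Matrix (Fin m) (Fin n) F := fun p =>
    Matrix.of fun i j =>
      if h : j ∈ p.1.1 then p.2.1 i ((p.1.1.orderIsoOfFin p.1.2).symm ⟨j, h⟩)
      else ∑ a, p.2.2 ((p.1.1ᶜ.orderIsoOfFin (hcompl p.1.1 p.1.2)).symm
        ⟨j, Finset.mem_compl.mpr h⟩) a * p.2.1 i a
  have key : ∀ X : {X : Matrix (Fin m) (Fin n) F // X.rank ≤ k}, ∃ p : T, ψ p = X.1 := by
    rintro ⟨X, hX⟩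
    obtain ⟨J, hJcard, hJspan⟩ := exists_spanning_finset hn hk X hX
    set eJ := J.orderIsoOfFin hJcard with heJ
    set eC := Jᶜ.orderIsoOfFin (hcompl J hJcard) with heC
    have himg : X.transpose '' (J : Set (Fin n)) = Set.range (fun a : Fin k => X.transpose ↑(eJ a)) := by
      ext x
      constructor
      · rintro ⟨y, hy, rfl⟩
        exact ⟨eJ.symm ⟨y, hy⟩, by simp⟩
      · rintro ⟨a, rfl⟩
        exact ⟨↑(eJ a), (eJ a).2, rfl⟩
    have hM : ∀ bb : Fin (n - k), ∃ c : Fin k → F,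
        ∑ a, c a • X.transpose ↑(eJ a) = X.transpose ↑(eC bb) := by
      intro bb
      have := hJspan ↑(eC bb)
      rw [himg, Submodule.mem_span_range_iff_exists_fun] at this
      exact this
    choose M hMspec using hM
    refine ⟨⟨⟨J, hJcard⟩, fun i a => X i ↑(eJ a), fun bb a => M bb a⟩, ?_⟩
    ext i j
    show (if h : j ∈ J then _ else _) = X i j
    split_ifs with h
    · show X i ↑(eJ (eJ.symm ⟨j, h⟩)) = X i j
      congr 1
      exact congrArg Subtype.val (eJ.apply_symm_apply ⟨j, h⟩)
    · have hjc : j ∈ Jᶜ := Finset.mem_compl.mpr h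
      set bb := eC.symm ⟨j, hjc⟩ with hbb
      have hspec := hMspec bb
      have hj' : ↑(eC bb) = j := congrArg Subtype.val (eC.apply_symm_apply ⟨j, hjc⟩)
      have := congrFun hspec i
      rw [Finset.sum_apply] at this
      simp only [Pi.smul_apply, smul_eq_mul] at this
      show (∑ a, M bb a * X i ↑(eJ a)) = X i j
      rw [← hj']
      exact this
  choose f hf using key
  have hfinj : Function.Injective f := by
    intro X Y h
    apply Subtype.ext
    rw [← hf X, ← hf Y, h]
  have hcard : Nat.card {X : Matrix (Fin m) (Fin n) F // X.rank ≤ k} ≤ Nat.card T :=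
    Nat.card_le_card_of_injective f hfinj
  refine le_trans hcard ?_
  have hmat : ∀ a b : ℕ, Nat.card (Matrix (Fin a) (Fin b) F) = q ^ (a * b) := by
    intro a b
    rw [Nat.card_eq_fintype_card]
    show Fintype.card (Fin a → Fin b → F) = q ^ (a * b)
    rw [Fintype.card_fun, Fintype.card_fun, Fintype.card_fin, Fintype.card_fin, hq, ← pow_mul,
      mul_comm b a]
  have hchoose : Nat.card {J : Finset (Fin n) // J.card = k} ≤ 2 ^ n := by
    rw [Nat.card_eq_fintype_card, Fintype.card_finset_len, Fintype.card_fin]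
    calc n.choose k ≤ ∑ i ∈ Finset.range (n + 1), n.choose i :=
          Finset.single_le_sum (fun i _ => Nat.zero_le _) (Finset.mem_range.mpr (by omega))
      _ = 2 ^ n := Nat.sum_range_choose n
  calc Nat.card T = Nat.card {J : Finset (Fin n) // J.card = k} *
        (q ^ (m * k) * q ^ ((n - k) * k)) := by
        rw [Nat.card_prod, Nat.card_prod, hmat, hmat]
    _ ≤ 2 ^ n * (q ^ (m * k) * q ^ ((n - k) * k)) := by
        exact Nat.mul_le_mul_right _ hchoose
    _ = 2 ^ n * q ^ (m * k + k * (n - k)) := by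
        rw [← pow_add, mul_comm (n - k) k]

set_option maxHeartbeats 1000000 in
/-- For `n ≤ m`, `0 < δ < 1`, `ρ ∈ (0,1)`, the ratio `|B_R(0,(1−δ)ρ)| / |B_R(0,ρ)|`
is at most `q^{−c·nm}` for some `c > 0` depending only on `δ` and `ρ` (and `q`),
for sufficiently large `n, m`. -/
theorem ball_ratio_bound (q : ℕ) (F : Type) [Field F] [Fintype F]
    (hq : Fintype.card F = q) (δ ρ : ℝ)
    (hδ : δ ∈ Set.Ioo (0 : ℝ) 1) (hρ : ρ ∈ Set.Ioo (0 : ℝ) 1) :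
    ∃ c : ℝ, 0 < c ∧ ∃ N : ℕ, ∀ n m : ℕ, N ≤ n → n ≤ m →
      (Nat.card {X : Matrix (Fin m) (Fin n) F // X.rank ≤ ⌊(1 - δ) * ρ * n⌋₊} : ℝ) ≤
        (q : ℝ) ^ (-(c * ((n : ℝ) * m))) *
          (Nat.card {X : Matrix (Fin m) (Fin n) F // X.rank ≤ ⌊ρ * n⌋₊} : ℝ) := by
  obtain ⟨hδ0, hδ1⟩ := hδ
  obtain ⟨hρ0, hρ1⟩ := hρ
  have hq2 : 2 ≤ q := hq ▸ Fintype.one_lt_card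
  have h1ρ : (0:ℝ) < 1 - ρ := by linarith
  have h1δ : (0:ℝ) < 1 - δ := by linarith
  set c : ℝ := δ * ρ * (1 - ρ) / 4 with hc
  have hcpos : 0 < c := by rw [hc]; positivity
  refine ⟨c, hcpos, ⌈2/(δ*ρ) + 8/(δ*ρ*(1-ρ)) + 1⌉₊, ?_⟩
  intro n m hNn hnm
  set k := ⌊(1 - δ) * ρ * (n:ℝ)⌋₊ with hkdef
  set r := ⌊ρ * (n:ℝ)⌋₊ with hrdef
  have hnR : (2/(δ*ρ) + 8/(δ*ρ*(1-ρ)) + 1 : ℝ) ≤ n :=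
    le_trans (Nat.le_ceil _) (Nat.cast_le.mpr hNn)
  have ht1 : (0:ℝ) ≤ 2/(δ*ρ) := by positivity
  have ht2 : (0:ℝ) ≤ 8/(δ*ρ*(1-ρ)) := by positivity
  have hn1 : (1:ℝ) ≤ n := by linarith
  have hnmR : (n:ℝ) ≤ m := Nat.cast_le.mpr hnm
  have hδρn2 : (2:ℝ) ≤ δ * ρ * n := by
    have h2n : 2/(δ*ρ) ≤ (n:ℝ) := by linarith
    have := (div_le_iff₀ (by positivity : (0:ℝ) < δ*ρ)).mp h2n
    linarith [this]
  have hcm : (2:ℝ) ≤ c * m := by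
    have h8m : 8/(δ*ρ*(1-ρ)) ≤ (m:ℝ) := by linarith
    have h2c : (2:ℝ)/c ≤ m := by
      have : (2:ℝ)/c = 8/(δ*ρ*(1-ρ)) := by
        rw [hc]; field_simp; norm_num
      linarith [this ▸ h8m]
    have := (div_le_iff₀ hcpos).mp h2c
    linarith
  have hn0 : 0 < n := by
    have : (1:ℝ) ≤ (n:ℝ) := hn1
    exact_mod_cast Nat.cast_pos.mp (by linarith : (0:ℝ) < n)
  have hkn : k ≤ n := by
    rw [hkdef]
    calc ⌊(1 - δ) * ρ * (n:ℝ)⌋₊ ≤ ⌊(n:ℝ)⌋₊ := Nat.floor_le_floor (by nlinarith)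
      _ = n := Nat.floor_natCast n
  have hrn : r ≤ n := by
    rw [hrdef]
    calc ⌊ρ * (n:ℝ)⌋₊ ≤ ⌊(n:ℝ)⌋₊ := Nat.floor_le_floor (by nlinarith)
      _ = n := Nat.floor_natCast n
  have hrm : r ≤ m := hrn.trans hnm
  have hr1 : 1 ≤ r := by
    rw [hrdef]
    apply Nat.le_floor
    push_cast
    nlinarith
  have hkR : (k:ℝ) ≤ (1-δ) * ρ * n := Nat.floor_le (by positivity)
  have hrR : (r:ℝ) ≤ ρ * n := Nat.floor_le (by positivity)
  have hrR' : ρ * (n:ℝ) - 1 ≤ r := by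
    have := Nat.lt_floor_add_one (ρ * (n:ℝ))
    linarith
  have hup := up_bound q hq (m := m) hkn hn0
  have hlow := low_bound q hq (m := m) hrn hnm
  have hUf : Nat.card {X : Matrix (Fin m) (Fin n) F // X.rank ≤ k} ≤
      q ^ (n + (m * k + k * (n - k))) := by
    refine le_trans hup ?_
    rw [pow_add q n (m * k + k * (n - k))]
    exact Nat.mul_le_mul_right _ (Nat.pow_le_pow_left hq2 n)
  -- real exponent inequality
  have hexp : ((n + (m * k + k * (n - k)) : ℕ) : ℝ) ≤
      ((r * (r - 1) + r * (n - r) + r * (m - r) : ℕ) : ℝ) - c * ((n:ℝ) * m) := by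
    push_cast [Nat.cast_sub hkn, Nat.cast_sub hr1, Nat.cast_sub hrn, Nat.cast_sub hrm]
    have hK0 : (0:ℝ) ≤ k := Nat.cast_nonneg k
    have hR0 : (0:ℝ) ≤ r := Nat.cast_nonneg r
    have hRn : (r:ℝ) ≤ n := Nat.cast_le.mpr hrn
    have hRK : δ * ρ * (n:ℝ) - 1 ≤ (r:ℝ) - k := by nlinarith
    have h2 : δ * ρ * (n:ℝ)/2 ≤ (r:ℝ) - k := by linarith
    have h3 : (1-ρ) * (m:ℝ) ≤ (m:ℝ) + n - r - k := by nlinarith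
    have hprod : (δ * ρ * (n:ℝ)/2) * ((1-ρ) * (m:ℝ)) ≤
        ((r:ℝ) - k) * ((m:ℝ) + n - r - k) :=
      mul_le_mul h2 h3 (by positivity) (by nlinarith)
    have hceq : (δ * ρ * (n:ℝ)/2) * ((1-ρ) * (m:ℝ)) = 2 * (c * ((n:ℝ) * m)) := by
      rw [hc]; ring
    have hcm2 : 2 * (n:ℝ) ≤ c * ((n:ℝ) * m) := by nlinarith
    nlinarith [hprod, hceq, hcm2, hRn]
  have hq1R : (1:ℝ) < q := by exact_mod_cast (by omega : 1 < q)
  have hq0R : (0:ℝ) < q := by linarith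
  calc (Nat.card {X : Matrix (Fin m) (Fin n) F // X.rank ≤ k} : ℝ)
      ≤ ((q ^ (n + (m * k + k * (n - k))) : ℕ) : ℝ) := Nat.cast_le.mpr hUf
    _ = (q:ℝ) ^ (((n + (m * k + k * (n - k)) : ℕ) : ℝ)) := by
        rw [Real.rpow_natCast]; push_cast; ring
    _ ≤ (q:ℝ) ^ (((r * (r - 1) + r * (n - r) + r * (m - r) : ℕ) : ℝ) - c * ((n:ℝ) * m)) :=
        Real.rpow_le_rpow_of_exponent_le (le_of_lt hq1R) hexp
    _ = (q:ℝ) ^ (-(c * ((n:ℝ) * m))) *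
          (q:ℝ) ^ (((r * (r - 1) + r * (n - r) + r * (m - r) : ℕ) : ℝ)) := by
        rw [← Real.rpow_add hq0R]; ring_nf
    _ = (q:ℝ) ^ (-(c * ((n:ℝ) * m))) *
          ((q ^ (r * (r - 1) + r * (n - r) + r * (m - r)) : ℕ) : ℝ) := by
        rw [Real.rpow_natCast]; push_cast; ring
    _ ≤ (q:ℝ) ^ (-(c * ((n:ℝ) * m))) *
          (Nat.card {X : Matrix (Fin m) (Fin n) F // X.rank ≤ r} : ℝ) := by
        have : (0:ℝ) ≤ (q:ℝ) ^ (-(c * ((n:ℝ) * m))) := le_of_lt (Real.rpow_pos_of_pos hq0R _)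
        exact mul_le_mul_of_nonneg_left (Nat.cast_le.mpr hlow) this
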